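/- For every q in (1,2], all r, R ≥ 0 and all t ∈ ℝ, one has (r² + R² + 2rR cos t)^{q/2} ≤ (3-q) r^q + q r R^{q-1} cos t + R^q. -/

import Mathlib

open Real

/-- Tangent-line (concavity) inequality for `x ↦ x^p`, `0 ≤ p ≤ 1`. -/
lemma rpow_tangent {p x a : ℝ} (hp0 : 0 ≤ p) (hp1 : p ≤ 1) (hx : 0 ≤ x) (ha : 0 < a) :
    x ^ p ≤ a ^ p + p * a ^ (p - 1) * (x - a) := by
  have hs : -1 ≤ x / a - 1 := by
    have : 0 ≤ x / a := div_nonneg hx ha.le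
    linarith
  have hB := rpow_one_add_le_one_add_mul_self hs hp0 hp1
  rw [add_sub_cancel] at hB
  have hxa : x = a * (x / a) := by field_simp
  have h1 : x ^ p = a ^ p * (x / a) ^ p := by
    rw [hxa]
    rw [Real.mul_rpow ha.le (div_nonneg hx ha.le)]
    congr 1
    rw [hxa, mul_div_assoc, mul_div_cancel_left₀ _ ha.ne']
  have hap : (0:ℝ) < a ^ p := Real.rpow_pos_of_pos ha p
  have h2 : a ^ p * (x / a) ^ p ≤ a ^ p * (1 + p * (x / a - 1)) :=
    mul_le_mul_of_nonneg_left hB hap.le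
  have h3 : a ^ p * (1 + p * (x / a - 1)) = a ^ p + p * a ^ (p - 1) * (x - a) := by
    have hap1 : a ^ (p - 1) * a = a ^ p := by
      rw [← Real.rpow_add_one ha.ne' (p - 1)]; ring_nf
    have : a ^ (p - 1) = a ^ p / a := by
      field_simp [← hap1]
      exact hap1
    rw [this]
    field_simp
  rw [h1]; rw [h3] at h2; exact h2

/-- Key one-variable inequality: for `1 < q ≤ 2` and `0 ≤ s ≤ 1`,
`q * s^(q-1) ≤ (2 - q) + q * s`. -/
lemma key_one_var {q s : ℝ} (hq1 : 1 < q) (hq2 : q ≤ 2) (hs0 : 0 ≤ s) (hs1 : s ≤ 1) :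
    q * s ^ (q - 1) ≤ (2 - q) + q * s := by
  rcases eq_or_lt_of_le hq2 with rfl | hq2
  · norm_num [Real.rpow_one]
  -- q < 2 case
  have hq1' : 0 < q - 1 := by linarith
  have h2q : 0 < 2 - q := by linarith
  set β : ℝ := (q - 1) ^ ((1:ℝ) / (2 - q)) with hβdef
  have hβ : 0 < β := Real.rpow_pos_of_pos hq1' _
  -- weighted AM-GM: s^(q-1) * β^(2-q) ≤ (q-1)*s + (2-q)*β
  have hgm : s ^ (q - 1) * β ^ (2 - q) ≤ (q - 1) * s + (2 - q) * β :=
    Real.geom_mean_le_arith_mean2_weighted hq1'.le h2q.le hs0 hβ.le (by ring)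
  -- β^(q-2) * β^(2-q) = 1
  have hββ : β ^ (q - 2) * β ^ (2 - q) = 1 := by
    rw [← Real.rpow_add hβ]
    have h0 : q - 2 + (2 - q) = 0 := by ring
    rw [h0, Real.rpow_zero]
  have hβq2 : (0:ℝ) < β ^ (q - 2) := Real.rpow_pos_of_pos hβ _
  -- multiply both sides by β^(q-2)
  have hmul : s ^ (q - 1) ≤ ((q - 1) * s + (2 - q) * β) * β ^ (q - 2) := by
    have := mul_le_mul_of_nonneg_right hgm hβq2.le
    calc s ^ (q - 1) = s ^ (q - 1) * (β ^ (2 - q) * β ^ (q - 2)) := by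
          rw [mul_comm (β ^ (2 - q)) (β ^ (q - 2)), hββ, mul_one]
      _ = s ^ (q - 1) * β ^ (2 - q) * β ^ (q - 2) := by ring
      _ ≤ ((q - 1) * s + (2 - q) * β) * β ^ (q - 2) := this
  -- (q-1) * β^(q-2) = 1
  have hcoef : (q - 1) * β ^ (q - 2) = 1 := by
    rw [hβdef, ← Real.rpow_mul hq1'.le]
    have h1 : (1:ℝ) / (2 - q) * (q - 2) = -1 := by field_simp; ring
    rw [h1, Real.rpow_neg_one]
    field_simp
  -- β^(q-1) ≤ exp (1 - q)
  have hβq1 : β ^ (q - 1) ≤ Real.exp (1 - q) := by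
    have hlog : Real.log (q - 1) ≤ q - 2 := by
      have := Real.log_le_sub_one_of_pos hq1'
      linarith
    have hβexp : β ^ (q - 1) = Real.exp ((1 / (2 - q)) * (q - 1) * Real.log (q - 1)) := by
      rw [hβdef, ← Real.rpow_mul hq1'.le, Real.rpow_def_of_pos hq1']
      ring_nf
    rw [hβexp]
    apply Real.exp_le_exp.mpr
    have hpos : 0 < (q - 1) / (2 - q) := div_pos hq1' h2q
    have : (1 / (2 - q)) * (q - 1) * Real.log (q - 1) ≤ (1 / (2 - q)) * (q - 1) * (q - 2) := by
      apply mul_le_mul_of_nonneg_left hlog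
      positivity
    have heq : (1 / (2 - q)) * (q - 1) * (q - 2) = 1 - q := by field_simp; ring
    linarith [heq ▸ this]
  -- q * exp(1-q) ≤ 1
  have hqexp : q * Real.exp (1 - q) ≤ 1 := by
    have h1 : q ≤ Real.exp (q - 1) := by
      have := Real.add_one_le_exp (q - 1)
      linarith
    have h2 : Real.exp (1 - q) * Real.exp (q - 1) = 1 := by
      rw [← Real.exp_add]; ring_nf; exact Real.exp_zero
    have hE : (0:ℝ) < Real.exp (1 - q) := Real.exp_pos _
    calc q * Real.exp (1 - q) ≤ Real.exp (q - 1) * Real.exp (1 - q) :=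
          mul_le_mul_of_nonneg_right h1 hE.le
      _ = 1 := by rw [mul_comm]; exact h2
  -- combine
  have hβtot : (2 - q) * β ^ (q - 1) * q ≤ 2 - q := by
    have : β ^ (q - 1) * q ≤ 1 := by
      calc β ^ (q - 1) * q ≤ Real.exp (1 - q) * q :=
            mul_le_mul_of_nonneg_right hβq1 (by linarith)
        _ = q * Real.exp (1 - q) := by ring
        _ ≤ 1 := hqexp
    calc (2 - q) * β ^ (q - 1) * q = (2 - q) * (β ^ (q - 1) * q) := by ring
      _ ≤ (2 - q) * 1 := mul_le_mul_of_nonneg_left this h2q.le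
      _ = 2 - q := mul_one _
  -- β^(q-1) = β^(q-2) * β
  have hβ12 : β ^ (q - 1) = β ^ (q - 2) * β := by
    rw [← Real.rpow_add_one hβ.ne' (q - 2)]; ring_nf
  have hfinal : q * s ^ (q - 1) ≤ q * s + (2 - q) * β ^ (q - 1) * q := by
    have := mul_le_mul_of_nonneg_left hmul (by linarith : (0:ℝ) ≤ q)
    have hexp : ((q - 1) * s + (2 - q) * β) * β ^ (q - 2) =
        ((q - 1) * β ^ (q - 2)) * s + (2 - q) * (β ^ (q - 2) * β) := by ring
    rw [hexp, hcoef, one_mul, ← hβ12] at this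
    calc q * s ^ (q - 1) ≤ q * (s + (2 - q) * β ^ (q - 1)) := this
      _ = q * s + (2 - q) * β ^ (q - 1) * q := by ring
  linarith

/-- Scalar reduction for the case `R ≤ r`. -/
lemma scalar_case_b (q s c : ℝ) (hq1 : 1 < q) (hq2 : q ≤ 2) (hs0 : 0 < s) (hs1 : s ≤ 1)
    (hc1 : -1 ≤ c) :
    1 + q / 2 * s ^ 2 + q * s * c ≤ (3 - q) + q * s ^ (q - 1) * c + s ^ q := by
  have hq0 : 0 < q := by linarith
  have hk1 : q * s ^ (q - 1) ≤ (2 - q) + q * s := key_one_var hq1 hq2 hs0.le hs1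
  have hk2 : s ^ 2 ≤ s ^ q := by
    rw [← Real.rpow_natCast s 2]
    apply Real.rpow_le_rpow_of_exponent_ge hs0 hs1
    push_cast; exact hq2
  have hssq : s ≤ s ^ (q - 1) := by
    nth_rewrite 1 [← Real.rpow_one s]
    exact Real.rpow_le_rpow_of_exponent_ge hs0 hs1 (by linarith)
  have hcterm : q * s * c - q * s ^ (q - 1) * c ≤ q * (s ^ (q - 1) - s) := by
    have h2 : 0 ≤ s ^ (q - 1) - s := by linarith
    nlinarith [mul_nonneg hq0.le h2]
  have hq2s : q / 2 * s ^ 2 ≤ s ^ q := by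
    nlinarith [sq_nonneg s]
  linarith

theorem scalar_parallelogram_type_inequality (q : ℝ) (hq : q ∈ Set.Ioc (1 : ℝ) 2)
    (r R : ℝ) (hr : 0 ≤ r) (hR : 0 ≤ R) (t : ℝ) :
    (r ^ 2 + R ^ 2 + 2 * r * R * Real.cos t) ^ (q / 2) ≤
      (3 - q) * r ^ q + q * r * R ^ (q - 1) * Real.cos t + R ^ q := by
  obtain ⟨hq1, hq2⟩ := hq
  have hq0 : 0 < q := by linarith
  set c := Real.cos t with hc
  have hc1 : -1 ≤ c := Real.neg_one_le_cos t
  have hc2 : c ≤ 1 := Real.cos_le_one t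
  -- helper: for x ≥ 0, (x^2)^(q/2) = x^q
  have sq_rpow : ∀ x : ℝ, 0 ≤ x → (x ^ 2) ^ (q / 2) = x ^ q := by
    intro x hx
    rw [← Real.rpow_natCast x 2, ← Real.rpow_mul hx]
    congr 1
    push_cast
    ring
  rcases eq_or_lt_of_le hR with rfl | hRpos
  · -- R = 0
    have h1 : (0:ℝ) ^ (q - 1) = 0 := Real.zero_rpow (by linarith)
    have h2 : (0:ℝ) ^ q = 0 := Real.zero_rpow (by linarith)
    simp only [h1, h2]
    have h3 : (r ^ 2 + 0 ^ 2 + 2 * r * 0 * c) = r ^ 2 := by ring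
    rw [h3, sq_rpow r hr]
    have hrq : 0 ≤ r ^ q := Real.rpow_nonneg hr q
    nlinarith
  rcases eq_or_lt_of_le hr with rfl | hrpos
  · -- r = 0
    have h2 : (0:ℝ) ^ q = 0 := Real.zero_rpow (by linarith)
    have h3 : ((0:ℝ) ^ 2 + R ^ 2 + 2 * 0 * R * c) = R ^ 2 := by ring
    rw [h3, sq_rpow R hRpos.le, h2]
    ring_nf
    nlinarith [Real.rpow_nonneg hRpos.le q]
  -- main case : r, R > 0
  have hN : 0 ≤ r ^ 2 + R ^ 2 + 2 * r * R * c := by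
    nlinarith [sq_nonneg (r - R), mul_nonneg (mul_nonneg (mul_pos hrpos hRpos).le (by norm_num : (0:ℝ) ≤ 2)) (by linarith : (0:ℝ) ≤ c + 1)]
  have hq2' : q / 2 ≤ 1 := by linarith
  have hq0' : 0 ≤ q / 2 := by linarith
  rcases le_total r R with hrR | hRr
  · -- Case A: r ≤ R, tangent at R^2
    have htan := rpow_tangent hq0' hq2' hN (by positivity : (0:ℝ) < R ^ 2)
    rw [sq_rpow R hRpos.le] at htan
    have hpow : (R ^ 2) ^ (q / 2 - 1) = R ^ (q - 2) := by
      rw [← Real.rpow_natCast R 2, ← Real.rpow_mul hRpos.le]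
      congr 1
      push_cast
      ring
    rw [hpow] at htan
    have hRq1 : R ^ (q - 2) * R = R ^ (q - 1) := by
      rw [← Real.rpow_add_one hRpos.ne' (q - 2)]; ring_nf
    -- the tangent bound equals R^q + (q/2) r^2 R^(q-2) + q r R^(q-1) c
    have htan' : (r ^ 2 + R ^ 2 + 2 * r * R * c) ^ (q / 2) ≤
        R ^ q + q / 2 * R ^ (q - 2) * r ^ 2 + q * r * R ^ (q - 1) * c := by
      calc (r ^ 2 + R ^ 2 + 2 * r * R * c) ^ (q / 2)
          ≤ R ^ q + q / 2 * R ^ (q - 2) * (r ^ 2 + R ^ 2 + 2 * r * R * c - R ^ 2) := htan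
        _ = R ^ q + q / 2 * R ^ (q - 2) * r ^ 2 + q * r * (R ^ (q - 2) * R) * c := by ring
        _ = R ^ q + q / 2 * R ^ (q - 2) * r ^ 2 + q * r * R ^ (q - 1) * c := by rw [hRq1]
    -- remains: (q/2) R^(q-2) r^2 ≤ (3-q) r^q
    have hkey : q / 2 * R ^ (q - 2) * r ^ 2 ≤ (3 - q) * r ^ q := by
      have hr2 : r ^ 2 = r ^ q * r ^ (2 - q) := by
        rw [← Real.rpow_add hrpos, ← Real.rpow_natCast r 2]; norm_num
      have hle : r ^ (2 - q) ≤ R ^ (2 - q) := Real.rpow_le_rpow hr (by exact hrR) (by linarith)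
      have hRneg : R ^ (q - 2) = (R ^ (2 - q))⁻¹ := by
        rw [← Real.rpow_neg hRpos.le]; congr 1; ring
      have hR2q : (0:ℝ) < R ^ (2 - q) := Real.rpow_pos_of_pos hRpos _
      have h1 : R ^ (q - 2) * r ^ (2 - q) ≤ 1 := by
        rw [hRneg]
        have h2 : (R ^ (2 - q))⁻¹ * r ^ (2 - q) ≤ (R ^ (2 - q))⁻¹ * R ^ (2 - q) := by
          gcongr
        rwa [inv_mul_cancel₀ hR2q.ne'] at h2
      have hrq : (0:ℝ) ≤ r ^ q := Real.rpow_nonneg hr q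
      calc q / 2 * R ^ (q - 2) * r ^ 2 = (q / 2) * (R ^ (q - 2) * r ^ (2 - q)) * r ^ q := by
            rw [hr2]; ring
        _ ≤ (q / 2) * 1 * r ^ q := by
            apply mul_le_mul_of_nonneg_right _ hrq
            apply mul_le_mul_of_nonneg_left h1 (by linarith)
        _ ≤ (3 - q) * r ^ q := by
            apply mul_le_mul_of_nonneg_right _ hrq
            linarith
    linarith
  · -- Case B: R ≤ r, tangent at r^2
    have htan := rpow_tangent hq0' hq2' hN (by positivity : (0:ℝ) < r ^ 2)
    rw [sq_rpow r hr] at htan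
    have hpow : (r ^ 2) ^ (q / 2 - 1) = r ^ (q - 2) := by
      rw [← Real.rpow_natCast r 2, ← Real.rpow_mul hr]
      congr 1
      push_cast
      ring
    rw [hpow] at htan
    have hrq1 : r ^ (q - 2) * r = r ^ (q - 1) := by
      rw [← Real.rpow_add_one hrpos.ne' (q - 2)]; ring_nf
    have htan' : (r ^ 2 + R ^ 2 + 2 * r * R * c) ^ (q / 2) ≤
        r ^ q + q / 2 * r ^ (q - 2) * R ^ 2 + q * R * r ^ (q - 1) * c := by
      calc (r ^ 2 + R ^ 2 + 2 * r * R * c) ^ (q / 2)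
          ≤ r ^ q + q / 2 * r ^ (q - 2) * (r ^ 2 + R ^ 2 + 2 * r * R * c - r ^ 2) := htan
        _ = r ^ q + q / 2 * r ^ (q - 2) * R ^ 2 + q * R * (r ^ (q - 2) * r) * c := by ring
        _ = r ^ q + q / 2 * r ^ (q - 2) * R ^ 2 + q * R * r ^ (q - 1) * c := by rw [hrq1]
    have hgoal : r ^ q + q / 2 * r ^ (q - 2) * R ^ 2 + q * R * r ^ (q - 1) * c ≤
        (3 - q) * r ^ q + q * r * R ^ (q - 1) * c + R ^ q := by
      have hs0 : 0 < R / r := div_pos hRpos hrpos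
      have hs1 : R / r ≤ 1 := (div_le_one hrpos).mpr hRr
      have hRs : R = R / r * r := (div_mul_cancel₀ R hrpos.ne').symm
      have hrqpos : (0:ℝ) < r ^ q := Real.rpow_pos_of_pos hrpos q
      have hred := scalar_case_b q (R / r) c hq1 hq2 hs0 hs1 hc1
      have hrq1r : r ^ (q - 1) * r = r ^ q := by
        rw [← Real.rpow_add_one hrpos.ne' (q - 1)]; ring_nf
      have hrq2r2 : r ^ (q - 2) * r ^ 2 = r ^ q := by
        rw [← Real.rpow_natCast r 2, ← Real.rpow_add hrpos]; norm_num
      have hRq : R ^ q = (R / r) ^ q * r ^ q := by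
        rw [← Real.mul_rpow hs0.le hr, ← hRs]
      have hRq1 : R ^ (q - 1) = (R / r) ^ (q - 1) * r ^ (q - 1) := by
        rw [← Real.mul_rpow hs0.le hr, ← hRs]
      have hL : q / 2 * r ^ (q - 2) * R ^ 2 = (q / 2 * (R / r) ^ 2) * r ^ q := by
        rw [← hrq2r2]
        field_simp
      have hM : q * R * r ^ (q - 1) * c = (q * (R / r) * c) * r ^ q := by
        rw [← hrq1r]
        field_simp
      have hN2 : q * r * R ^ (q - 1) * c = (q * (R / r) ^ (q - 1) * c) * r ^ q := by
        rw [hRq1, ← hrq1r]; ring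
      rw [hL, hM, hN2, hRq]
      nlinarith [hrqpos, hred]
    linarith
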